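/- Let n be a positive integer and let a₁,…,aₙ and b₁,…,bₙ be positive real numbers. Define T = Σ_{k=1}^n aₖ/bₖ and, for m = 1, 2, 3, S^(m) = Σ_{k=1}^n Σ_{l=1}^n aₖaₗ/(bₖ+bₗ)^m. Then T² ≤ 2·S^(2) + 2√2·√(S^(1)·S^(3)). -/

import Mathlib

open Real Finset MeasureTheory Set Filter Topology

private lemma intOn_exp' {s : ℝ} (hs : 0 < s) :
    IntegrableOn (fun t : ℝ => Real.exp (-(s * t))) (Ioi 0) := by
  simpa [neg_mul] using exp_neg_integrableOn_Ioi 0 hs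

private lemma intOn_poly_exp' {s : ℝ} (hs : 0 < s) (m : ℕ) :
    IntegrableOn (fun t : ℝ => t ^ m * Real.exp (-(s * t))) (Ioi 0) := by
  have h := integrableOn_rpow_mul_exp_neg_mul_rpow (p := 1) (s := (m : ℝ)) (b := s)
    (lt_of_lt_of_le neg_one_lt_zero (Nat.cast_nonneg m)) one_pos hs
  refine h.congr_fun (fun t ht => ?_) measurableSet_Ioi
  beta_reduce
  rw [Real.rpow_one, Real.rpow_natCast, neg_mul]

private lemma gamma_two' : Real.Gamma 2 = 1 := by
  rw [show (2:ℝ) = 1 + 1 by norm_num, Real.Gamma_add_one one_ne_zero, Real.Gamma_one, mul_one]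

private lemma gamma_three' : Real.Gamma 3 = 2 := by
  rw [show (3:ℝ) = 2 + 1 by norm_num, Real.Gamma_add_one two_ne_zero, gamma_two', mul_one]

private lemma intval_exp' {s : ℝ} (hs : 0 < s) :
    ∫ t in Ioi 0, Real.exp (-(s * t)) = 1 / s := by
  have h := Real.integral_rpow_mul_exp_neg_mul_Ioi (a := 1) one_pos hs
  simpa [Real.Gamma_one, Real.rpow_one] using h

private lemma intval_t_exp' {s : ℝ} (hs : 0 < s) :
    ∫ t in Ioi 0, t * Real.exp (-(s * t)) = 1 / s ^ 2 := by
  have h := Real.integral_rpow_mul_exp_neg_mul_Ioi (a := 2) (by norm_num) hs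
  have e : ∀ t : ℝ, t ^ ((2:ℝ) - 1) = t := fun t => by
    rw [show (2:ℝ) - 1 = 1 by norm_num, Real.rpow_one]
  simp_rw [e] at h
  rw [h, gamma_two', mul_one, show (2:ℝ) = ((2:ℕ):ℝ) by norm_num, Real.rpow_natCast,
    div_pow, one_pow]

private lemma intval_t2_exp' {s : ℝ} (hs : 0 < s) :
    ∫ t in Ioi 0, t ^ 2 * Real.exp (-(s * t)) = 2 / s ^ 3 := by
  have h := Real.integral_rpow_mul_exp_neg_mul_Ioi (a := 3) (by norm_num) hs
  have e : ∀ t : ℝ, t ^ ((3:ℝ) - 1) = t ^ 2 := fun t => by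
    rw [show (3:ℝ) - 1 = ((2:ℕ):ℝ) by norm_num, Real.rpow_natCast]
  simp_rw [e] at h
  rw [h, gamma_three', show (3:ℝ) = ((3:ℕ):ℝ) by norm_num, Real.rpow_natCast,
    div_pow, one_pow]
  ring

private lemma weight_deriv' {lam : ℝ} (hlam : 0 < lam) :
    ∀ x ∈ Ici (0:ℝ), HasDerivAt (fun t : ℝ => -lam / (lam + t)) (lam / (lam + x) ^ 2) x := by
  intro x hx
  have hx0 : lam + x ≠ 0 := by have := hx.out; positivity
  have h1 : HasDerivAt (fun t : ℝ => lam + t) 1 x := (hasDerivAt_id x).const_add lam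
  have h2 := h1.inv hx0
  have h3 := h2.const_mul (-lam)
  have hfe : (fun t : ℝ => -lam / (lam + t)) = fun y : ℝ => -lam * (lam + y)⁻¹ := by
    funext t; rw [div_eq_mul_inv]
  rw [hfe]
  refine h3.congr_deriv ?_
  ring

private lemma weight_tendsto' {lam : ℝ} :
    Tendsto (fun t : ℝ => -lam / (lam + t)) atTop (𝓝 0) := by
  apply Tendsto.div_atTop tendsto_const_nhds
  exact tendsto_atTop_add_const_left _ lam tendsto_id

private lemma weight_int' {lam : ℝ} (hlam : 0 < lam) :
    IntegrableOn (fun t : ℝ => lam / (lam + t) ^ 2) (Ioi 0) :=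
  integrableOn_Ioi_deriv_of_nonneg' (weight_deriv' hlam)
    (fun x hx => by have := hx.out; positivity) weight_tendsto'

private lemma weight_val' {lam : ℝ} (hlam : 0 < lam) :
    ∫ t in Ioi 0, lam / (lam + t) ^ 2 = 1 := by
  rw [integral_Ioi_of_hasDerivAt_of_nonneg' (weight_deriv' hlam)
    (fun x hx => by have := hx.out; positivity) weight_tendsto']
  field_simp
  ring

private lemma term_int' {lam s : ℝ} (hlam : 0 < lam) (hs : 0 < s) :
    IntegrableOn (fun t : ℝ => (lam + 2 * t + t ^ 2 / lam) * Real.exp (-(s * t))) (Ioi 0) := by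
  have hfe : (fun t : ℝ => (lam + 2 * t + t ^ 2 / lam) * Real.exp (-(s * t)))
      = fun t : ℝ => lam * Real.exp (-(s * t)) + 2 * (t ^ 1 * Real.exp (-(s * t)))
        + (1 / lam) * (t ^ 2 * Real.exp (-(s * t))) := by
    funext t; ring
  rw [hfe]
  exact (((intOn_exp' hs).const_mul lam).add ((intOn_poly_exp' hs 1).const_mul 2)).add
    ((intOn_poly_exp' hs 2).const_mul (1 / lam))

private lemma term_val' {lam s : ℝ} (hlam : 0 < lam) (hs : 0 < s) :
    ∫ t in Ioi 0, (lam + 2 * t + t ^ 2 / lam) * Real.exp (-(s * t))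
      = lam / s + 2 / s ^ 2 + (2 / lam) / s ^ 3 := by
  have hfe : (fun t : ℝ => (lam + 2 * t + t ^ 2 / lam) * Real.exp (-(s * t)))
      = fun t : ℝ => lam * Real.exp (-(s * t)) + 2 * (t ^ 1 * Real.exp (-(s * t)))
        + (1 / lam) * (t ^ 2 * Real.exp (-(s * t))) := by
    funext t; ring
  have h1 := (intOn_exp' hs).const_mul lam
  have h2 := (intOn_poly_exp' hs 1).const_mul 2
  have h3 := (intOn_poly_exp' hs 2).const_mul (1 / lam)
  have h12 : Integrable (fun x : ℝ => lam * Real.exp (-(s * x)) + 2 * (x ^ 1 * Real.exp (-(s * x))))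
      (volume.restrict (Ioi 0)) := h1.add h2
  rw [hfe, integral_add h12 h3, integral_add h1 h2, integral_const_mul,
    integral_const_mul, integral_const_mul]
  simp_rw [pow_one]
  rw [intval_exp' hs, intval_t_exp' hs, intval_t2_exp' hs]
  field_simp

private lemma key' (n : ℕ) (a b : Fin n → ℝ) (ha : ∀ i, 0 < a i) (hb : ∀ i, 0 < b i)
    (lam : ℝ) (hlam : 0 < lam) :
    (∑ k, a k / b k) ^ 2 ≤
      lam * (∑ k, ∑ l, a k * a l / (b k + b l) ^ 1) +
      2 * (∑ k, ∑ l, a k * a l / (b k + b l) ^ 2) +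
      (2 / lam) * (∑ k, ∑ l, a k * a l / (b k + b l) ^ 3) := by
  have hbs : ∀ k l : Fin n, 0 < b k + b l := fun k l => by have := hb k; have := hb l; linarith
  set c : ℝ := ∑ k, a k / b k with hc
  set F : ℝ → ℝ := fun t => ∑ k, a k * Real.exp (-(b k * t)) with hF
  -- integrability and value of F
  have hFint : IntegrableOn F (Ioi 0) := by
    apply integrable_finset_sum
    intro k _
    exact (intOn_exp' (hb k)).const_mul (a k)
  have hFval : ∫ t in Ioi 0, F t = c := by
    rw [hF, integral_finset_sum _ (fun k _ => (intOn_exp' (hb k)).const_mul (a k))]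
    refine Finset.sum_congr rfl fun k _ => ?_
    rw [integral_const_mul, intval_exp' (hb k)]
    ring
  -- the weighted square
  set G : ℝ → ℝ := fun t => ∑ k, ∑ l,
    a k * a l * ((lam + 2 * t + t ^ 2 / lam) * Real.exp (-((b k + b l) * t))) with hG
  have hGeq : ∀ t : ℝ, (lam + 2 * t + t ^ 2 / lam) * (F t) ^ 2 = G t := by
    intro t
    simp only [hF, hG]
    rw [show (∑ k, a k * Real.exp (-(b k * t))) ^ 2
        = ∑ k, ∑ l, (a k * Real.exp (-(b k * t))) * (a l * Real.exp (-(b l * t))) by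
      rw [sq, Finset.sum_mul_sum]]
    simp only [Finset.mul_sum]
    refine Finset.sum_congr rfl fun k _ => Finset.sum_congr rfl fun l _ => ?_
    rw [mul_mul_mul_comm, ← Real.exp_add,
      show -(b k * t) + -(b l * t) = -((b k + b l) * t) by ring]
    ring
  have hGint : IntegrableOn G (Ioi 0) := by
    apply integrable_finset_sum
    intro k _
    apply integrable_finset_sum
    intro l _
    exact (term_int' hlam (hbs k l)).const_mul _
  have hGval : ∫ t in Ioi 0, G t = ∑ k, ∑ l, a k * a l *
      (lam / (b k + b l) + 2 / (b k + b l) ^ 2 + (2 / lam) / (b k + b l) ^ 3) := by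
    rw [hG, integral_finset_sum _ (fun k _ => integrable_finset_sum _
      (fun l _ => (term_int' hlam (hbs k l)).const_mul _))]
    refine Finset.sum_congr rfl fun k _ => ?_
    rw [integral_finset_sum _ (fun l _ => (term_int' hlam (hbs k l)).const_mul _)]
    refine Finset.sum_congr rfl fun l _ => ?_
    rw [integral_const_mul, term_val' hlam (hbs k l)]
  -- pointwise inequality
  have hpt : ∀ t ∈ Ioi (0:ℝ), 2 * c * F t ≤
      (lam + 2 * t + t ^ 2 / lam) * (F t) ^ 2 + c ^ 2 * (lam / (lam + t) ^ 2) := by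
    intro t ht
    have ht' : 0 < t := ht
    have hu : 0 < lam + t := by linarith
    have hw : lam + 2 * t + t ^ 2 / lam = (lam + t) ^ 2 / lam := by
      field_simp; ring
    rw [hw]
    have hkey : (lam + t) ^ 2 / lam * (F t) ^ 2 + c ^ 2 * (lam / (lam + t) ^ 2) - 2 * c * F t
        = ((lam + t) * F t - c * lam / (lam + t)) ^ 2 / lam := by
      field_simp
      ring
    have h0 : 0 ≤ ((lam + t) * F t - c * lam / (lam + t)) ^ 2 / lam := by positivity
    linarith
  -- integrate
  have hLint : IntegrableOn (fun t : ℝ => 2 * c * F t) (Ioi 0) := hFint.const_mul (2 * c)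
  have hG2 : (fun t : ℝ => (lam + 2 * t + t ^ 2 / lam) * (F t) ^ 2) = G := funext hGeq
  have hGint' : IntegrableOn (fun t : ℝ => (lam + 2 * t + t ^ 2 / lam) * (F t) ^ 2) (Ioi 0) := by
    rw [hG2]; exact hGint
  have hWint' : IntegrableOn (fun t : ℝ => c ^ 2 * (lam / (lam + t) ^ 2)) (Ioi 0) :=
    (weight_int' hlam).const_mul (c ^ 2)
  have hRint : IntegrableOn (fun t : ℝ =>
      (lam + 2 * t + t ^ 2 / lam) * (F t) ^ 2 + c ^ 2 * (lam / (lam + t) ^ 2)) (Ioi 0) :=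
    hGint'.add hWint'
  have hcomp := setIntegral_mono_on hLint hRint measurableSet_Ioi hpt
  rw [integral_const_mul, hFval] at hcomp
  rw [integral_add hGint' hWint', hG2, hGval, integral_const_mul, weight_val' hlam] at hcomp
  -- rearrange
  have hsplit : ∑ k, ∑ l, a k * a l *
      (lam / (b k + b l) + 2 / (b k + b l) ^ 2 + (2 / lam) / (b k + b l) ^ 3)
      = lam * (∑ k, ∑ l, a k * a l / (b k + b l) ^ 1) +
        2 * (∑ k, ∑ l, a k * a l / (b k + b l) ^ 2) +
        (2 / lam) * (∑ k, ∑ l, a k * a l / (b k + b l) ^ 3) := by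
    simp only [Finset.mul_sum, ← Finset.sum_add_distrib]
    refine Finset.sum_congr rfl fun k _ => Finset.sum_congr rfl fun l _ => ?_
    ring
  rw [hsplit] at hcomp
  nlinarith [hcomp]

private lemma lam_comb' {x y : ℝ} (hx : 0 < x) (hy : 0 < y) :
    Real.sqrt (2 * y / x) * x + (2 / Real.sqrt (2 * y / x)) * y
      = 2 * Real.sqrt 2 * Real.sqrt (x * y) := by
  have hl : 0 < Real.sqrt (2 * y / x) := Real.sqrt_pos.2 (by positivity)
  have hA : Real.sqrt (2 * y * x) = Real.sqrt (2 * y / x) * x := by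
    rw [show 2 * y * x = 2 * y / x * x ^ 2 by field_simp,
      Real.sqrt_mul (by positivity) (x ^ 2), Real.sqrt_sq hx.le]
  have h2 : Real.sqrt (2 * y / x) ^ 2 = 2 * y / x := Real.sq_sqrt (by positivity)
  rw [eq_div_iff hx.ne'] at h2
  have hB : (2 / Real.sqrt (2 * y / x)) * y = Real.sqrt (2 * y / x) * x := by
    rw [div_mul_eq_mul_div, div_eq_iff hl.ne']
    nlinarith [h2]
  rw [hB, ← two_mul, ← hA, show 2 * y * x = 2 * (x * y) by ring,
    Real.sqrt_mul (by norm_num : (0:ℝ) ≤ 2) (x * y)]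
  ring

theorem hilbert_like_reverse_inequality
    (n : ℕ) (hn : 0 < n) (a b : Fin n → ℝ)
    (ha : ∀ i, 0 < a i) (hb : ∀ i, 0 < b i) :
    (∑ k, a k / b k) ^ 2 ≤
      2 * (∑ k, ∑ l, a k * a l / (b k + b l) ^ 2) +
      2 * Real.sqrt 2 *
        Real.sqrt ((∑ k, ∑ l, a k * a l / (b k + b l) ^ 1) *
          (∑ k, ∑ l, a k * a l / (b k + b l) ^ 3)) := by
  haveI : Nonempty (Fin n) := ⟨⟨0, hn⟩⟩
  have hbs : ∀ k l : Fin n, 0 < b k + b l := fun k l => by have := hb k; have := hb l; linarith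
  set S1 : ℝ := ∑ k, ∑ l, a k * a l / (b k + b l) ^ 1 with hS1def
  set S2 : ℝ := ∑ k, ∑ l, a k * a l / (b k + b l) ^ 2 with hS2def
  set S3 : ℝ := ∑ k, ∑ l, a k * a l / (b k + b l) ^ 3 with hS3def
  have hS1 : 0 < S1 := by
    rw [hS1def]
    refine Finset.sum_pos (fun k _ => Finset.sum_pos (fun l _ => ?_) univ_nonempty) univ_nonempty
    have := ha k; have := ha l; have := hbs k l; positivity
  have hS3 : 0 < S3 := by
    rw [hS3def]
    refine Finset.sum_pos (fun k _ => Finset.sum_pos (fun l _ => ?_) univ_nonempty) univ_nonempty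
    have := ha k; have := ha l; have := hbs k l; positivity
  have hlam : 0 < Real.sqrt (2 * S3 / S1) := Real.sqrt_pos.2 (by positivity)
  have h := key' n a b ha hb (Real.sqrt (2 * S3 / S1)) hlam
  rw [← hS1def, ← hS2def, ← hS3def] at h
  have key_eq := lam_comb' hS1 hS3
  linarith [h, key_eq]
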